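/- If rationals x, y with x ≠ 0 satisfy y^2 = x^3 - 4, then a = (y+2)/(2x) and b = -(y-2)/(2x) satisfy a^3 + a^2 b + a b^2 + b^3 = 1. -/

import Mathlib

theorem stmt_6 (x y : ℚ) (hx : x ≠ 0) (h : y^2 = x^3 - 4) :
    ((y+2)/(2*x))^3 + ((y+2)/(2*x))^2 * (-(y-2)/(2*x))
      + ((y+2)/(2*x)) * (-(y-2)/(2*x))^2 + (-(y-2)/(2*x))^3 = 1 := by
  field_simp
  linear_combination 8 * h
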